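/- arXiv:2007.02596 — 3 statements merged into one kernel-verified Lean document; each statement's English description precedes it below -/
import Mathlib

section
/- Let d ≥ 1, n ≥ 1, a > 0 and let y_1, …, y_n ∈ ℝ^d. Let ψ_n(t) = (1/n) Σ_{j=1}^n exp(i tᵀ y_j) with gradient ∇ψ_n(t) = (1/n) Σ_{j=1}^n i y_j exp(i tᵀ y_j). Then n ∫_{ℝ^d} ‖∇ψ_n(t) + t ψ(t)‖²_ℂ exp(−a‖t‖²) dt = ∫_{ℝ^d} ‖ (1/√n) Σ_{j=1}^n ( y_j (cos(tᵀ y_j) + sin(tᵀ y_j)) − t ψ(t) ) ‖² exp(−a‖t‖²) dt, where the norm on the right-hand side is the Euclidean norm on ℝ^d. -/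
open MeasureTheory Real

/-- The characteristic function of the standard `d`-variate normal distribution. -/
noncomputable def stdNormalCF {d : ℕ} (t : EuclideanSpace ℝ (Fin d)) : ℝ :=
  Real.exp (-‖t‖ ^ 2 / 2)

/-- Gradient of the empirical characteristic function of the points `y 1, …, y n`:
`∇ψ_n(t) = (1/n) ∑_j i y_j exp(i tᵀ y_j)`, viewed as a vector in `ℂ^d`. -/
noncomputable def gradEmpCF {d n : ℕ} (y : Fin n → EuclideanSpace ℝ (Fin d))
    (t : EuclideanSpace ℝ (Fin d)) : EuclideanSpace ℂ (Fin d) :=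
  WithLp.toLp 2 fun k => (n : ℂ)⁻¹ * ∑ j, Complex.I * (y j k : ℂ) *
    Complex.exp (Complex.I * ((inner ℝ t (y j) : ℝ) : ℂ))

/-- The vector `t ψ(t)` viewed in `ℂ^d`. -/
noncomputable def tPsiC {d : ℕ} (t : EuclideanSpace ℝ (Fin d)) : EuclideanSpace ℂ (Fin d) :=
  WithLp.toLp 2 fun k => ((stdNormalCF t * t k : ℝ) : ℂ)

lemma euc_norm_sq_real {d : ℕ} (x : EuclideanSpace ℝ (Fin d)) :
    ‖x‖ ^ 2 = ∑ k, (x k) ^ 2 := by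
  rw [EuclideanSpace.norm_eq, Real.sq_sqrt (by positivity)]
  simp [sq_abs]

lemma euc_norm_sq_complex {d : ℕ} (x : EuclideanSpace ℂ (Fin d)) :
    ‖x‖ ^ 2 = ∑ k, ‖x k‖ ^ 2 := by
  rw [EuclideanSpace.norm_eq, Real.sq_sqrt (by positivity)]

lemma key_term (θ c : ℝ) :
    Complex.I * (c : ℂ) * Complex.exp (Complex.I * (θ : ℂ)) =
      ((-(c * Real.sin θ) : ℝ) : ℂ) + ((c * Real.cos θ : ℝ) : ℂ) * Complex.I := by
  rw [mul_comm Complex.I (θ:ℂ), Complex.exp_mul_I]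
  push_cast [Complex.ofReal_cos, Complex.ofReal_sin]
  ring_nf
  simp [Complex.I_sq]
  ring

lemma pointL {d n : ℕ} (y : Fin n → EuclideanSpace ℝ (Fin d)) (t : EuclideanSpace ℝ (Fin d)) :
    ‖gradEmpCF y t + tPsiC t‖ ^ 2 =
      ∑ k, ((stdNormalCF t * t k - (∑ j, y j k * Real.sin (inner ℝ t (y j) : ℝ)) / n) ^ 2
        + ((∑ j, y j k * Real.cos (inner ℝ t (y j) : ℝ)) / n) ^ 2) := by
  rw [euc_norm_sq_complex]
  refine Finset.sum_congr rfl fun k _ => ?_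
  have hcomp : (gradEmpCF y t + tPsiC t) k =
      ((stdNormalCF t * t k - (∑ j, y j k * Real.sin (inner ℝ t (y j) : ℝ)) / n : ℝ) : ℂ)
      + (((∑ j, y j k * Real.cos (inner ℝ t (y j) : ℝ)) / n : ℝ) : ℂ) * Complex.I := by
    show gradEmpCF y t k + tPsiC t k = _
    rw [gradEmpCF, tPsiC]
    simp only [key_term]
    rw [Finset.sum_add_distrib, ← Finset.sum_mul]
    push_cast
    rw [Finset.sum_neg_distrib]
    ring
  rw [hcomp, Complex.sq_norm, Complex.normSq_add_mul_I]

lemma pointR {d n : ℕ} (hn : 1 ≤ n) (y : Fin n → EuclideanSpace ℝ (Fin d))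
    (t : EuclideanSpace ℝ (Fin d)) :
    ‖(Real.sqrt n)⁻¹ •
        ∑ j, ((Real.cos (inner ℝ t (y j) : ℝ) + Real.sin (inner ℝ t (y j) : ℝ)) • y j
          - stdNormalCF t • t)‖ ^ 2 =
      ∑ k, (((∑ j, y j k * Real.cos (inner ℝ t (y j) : ℝ))
          + (∑ j, y j k * Real.sin (inner ℝ t (y j) : ℝ))
          - n * (stdNormalCF t * t k)) ^ 2 / n) := by
  have hn0 : (0:ℝ) < n := by exact_mod_cast hn
  rw [euc_norm_sq_real]
  refine Finset.sum_congr rfl fun k _ => ?_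
  have hcomp : ((Real.sqrt n)⁻¹ •
      ∑ j, ((Real.cos (inner ℝ t (y j) : ℝ) + Real.sin (inner ℝ t (y j) : ℝ)) • y j
        - stdNormalCF t • t)) k =
      (Real.sqrt n)⁻¹ * ((∑ j, y j k * Real.cos (inner ℝ t (y j) : ℝ))
        + (∑ j, y j k * Real.sin (inner ℝ t (y j) : ℝ)) - n * (stdNormalCF t * t k)) := by
    simp only [PiLp.smul_apply, smul_eq_mul]
    rw [show (∑ j, ((Real.cos (inner ℝ t (y j) : ℝ) + Real.sin (inner ℝ t (y j) : ℝ)) • y j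
        - stdNormalCF t • t)) k
      = ∑ j, (((Real.cos (inner ℝ t (y j) : ℝ) + Real.sin (inner ℝ t (y j) : ℝ)) • y j
        - stdNormalCF t • t) k) from by rw [WithLp.ofLp_sum]; exact Finset.sum_apply k Finset.univ _]
    simp only [PiLp.sub_apply, PiLp.smul_apply, smul_eq_mul]
    rw [Finset.sum_sub_distrib, Finset.sum_const,
      show ∑ j, (Real.cos (inner ℝ t (y j) : ℝ) + Real.sin (inner ℝ t (y j) : ℝ)) * y j k
        = ∑ j, (y j k * Real.cos (inner ℝ t (y j) : ℝ) + y j k * Real.sin (inner ℝ t (y j) : ℝ))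
        from Finset.sum_congr rfl fun j _ => by ring,
      Finset.sum_add_distrib]
    simp only [Finset.card_univ, Fintype.card_fin, nsmul_eq_mul]
    try ring
  rw [hcomp, mul_pow, ← Real.sqrt_inv, Real.sq_sqrt (by positivity)]
  rw [div_eq_inv_mul]

set_option maxHeartbeats 2000000 in
/-- Equation (3.1)/(3.2). The test statistic equals
`∫ ‖Z_n(t)‖² w_a(t) dt` with the real-valued process
`Z_n(t) = n^{-1/2} ∑_j ( y_j (cos(tᵀy_j) + sin(tᵀy_j)) - t ψ(t) )`. -/
theorem test_statistic_real_process_representation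
    (d n : ℕ) (hd : 1 ≤ d) (hn : 1 ≤ n) (a : ℝ) (ha : 0 < a)
    (y : Fin n → EuclideanSpace ℝ (Fin d)) :
    (n : ℝ) * ∫ t : EuclideanSpace ℝ (Fin d),
        ‖gradEmpCF y t + tPsiC t‖ ^ 2 * Real.exp (-a * ‖t‖ ^ 2)
      = ∫ t : EuclideanSpace ℝ (Fin d),
          ‖(Real.sqrt n)⁻¹ •
              ∑ j, ((Real.cos (inner ℝ t (y j) : ℝ) + Real.sin (inner ℝ t (y j) : ℝ)) • y j
                - stdNormalCF t • t)‖ ^ 2 * Real.exp (-a * ‖t‖ ^ 2) := by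
  have hn0 : (0:ℝ) < n := by exact_mod_cast hn
  set G : EuclideanSpace ℝ (Fin d) → ℝ := fun t =>
    ‖(Real.sqrt n)⁻¹ •
        ∑ j, ((Real.cos (inner ℝ t (y j) : ℝ) + Real.sin (inner ℝ t (y j) : ℝ)) • y j
          - stdNormalCF t • t)‖ ^ 2 * Real.exp (-a * ‖t‖ ^ 2) with hG
  have hGnn : ∀ t, 0 ≤ G t := fun t => by rw [hG]; positivity
  -- key pointwise identity
  have hkey : ∀ t : EuclideanSpace ℝ (Fin d),
      (n : ℝ) * (‖gradEmpCF y t + tPsiC t‖ ^ 2 * Real.exp (-a * ‖t‖ ^ 2))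
        = (G t + G (-t)) / 2 := by
    intro t
    have hRneg : G (-t) =
        (∑ k, (((∑ j, y j k * Real.cos (inner ℝ t (y j) : ℝ))
            - (∑ j, y j k * Real.sin (inner ℝ t (y j) : ℝ))
            + n * (stdNormalCF t * t k)) ^ 2 / n)) * Real.exp (-a * ‖t‖ ^ 2) := by
      rw [hG]
      simp only
      rw [pointR hn y (-t), norm_neg]
      congr 1
      refine Finset.sum_congr rfl fun k _ => ?_
      have h1 : stdNormalCF (-t) = stdNormalCF t := by rw [stdNormalCF, stdNormalCF, norm_neg]
      simp only [inner_neg_left, Real.cos_neg, Real.sin_neg, mul_neg,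
        Finset.sum_neg_distrib, h1, PiLp.neg_apply, neg_neg]
      ring
    have hRpos : G t =
        (∑ k, (((∑ j, y j k * Real.cos (inner ℝ t (y j) : ℝ))
            + (∑ j, y j k * Real.sin (inner ℝ t (y j) : ℝ))
            - n * (stdNormalCF t * t k)) ^ 2 / n)) * Real.exp (-a * ‖t‖ ^ 2) := by
      rw [hG]; simp only; rw [pointR hn y t]
    rw [hRneg, hRpos, pointL y t]
    rw [← add_mul, ← Finset.sum_add_distrib]
    rw [show (∑ k, ((stdNormalCF t * t k
          - (∑ j, y j k * Real.sin (inner ℝ t (y j) : ℝ)) / n) ^ 2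
        + ((∑ j, y j k * Real.cos (inner ℝ t (y j) : ℝ)) / n) ^ 2))
      = ∑ k, ((((∑ j, y j k * Real.cos (inner ℝ t (y j) : ℝ))
            + (∑ j, y j k * Real.sin (inner ℝ t (y j) : ℝ))
            - n * (stdNormalCF t * t k)) ^ 2 / n
          + ((∑ j, y j k * Real.cos (inner ℝ t (y j) : ℝ))
            - (∑ j, y j k * Real.sin (inner ℝ t (y j) : ℝ))
            + n * (stdNormalCF t * t k)) ^ 2 / n) / (2 * n))
      from Finset.sum_congr rfl fun k _ => by field_simp; ring]
    rw [← Finset.sum_div]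
    rw [div_mul_eq_mul_div, mul_div_assoc', mul_comm (2:ℝ) (n:ℝ),
      mul_div_mul_left _ _ (ne_of_gt hn0)]
  have hmp : MeasurePreserving (fun t : EuclideanSpace ℝ (Fin d) => -t) volume volume :=
    Measure.measurePreserving_neg _
  have hemb := (MeasurableEquiv.neg (EuclideanSpace ℝ (Fin d))).measurableEmbedding
  have hneg_int : ∫ t, G (-t) = ∫ t, G t := hmp.integral_comp hemb G
  rw [← MeasureTheory.integral_const_mul]
  by_cases hint : Integrable G volume
  · have h2 : Integrable (fun t => G (-t)) volume :=
      (hmp.integrable_comp_emb hemb).2 hint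
    calc ∫ t, (n : ℝ) * (‖gradEmpCF y t + tPsiC t‖ ^ 2 * Real.exp (-a * ‖t‖ ^ 2))
        = ∫ t, (G t + G (-t)) / 2 := by exact integral_congr_ae (Filter.Eventually.of_forall hkey)
      _ = (∫ t, (G t + G (-t))) / 2 := integral_div 2 _
      _ = ((∫ t, G t) + ∫ t, G (-t)) / 2 := by rw [integral_add hint h2]
      _ = ∫ t, G t := by rw [hneg_int]; ring
  · have hGc : Continuous G := by
      rw [hG]
      apply Continuous.mul
      · apply Continuous.pow
        apply Continuous.norm
        apply Continuous.fun_const_smul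
        apply continuous_finset_sum
        intro j _
        refine Continuous.sub ?_ ?_
        · exact ((Real.continuous_cos.comp (continuous_id.inner continuous_const)).add
            (Real.continuous_sin.comp (continuous_id.inner continuous_const))).smul
            continuous_const
        · exact (Real.continuous_exp.comp
            ((continuous_norm.pow 2).neg.div_const 2)).smul continuous_id
      · exact Real.continuous_exp.comp (continuous_const.mul (continuous_norm.pow 2))
    have hnotF : ¬ Integrable (fun t : EuclideanSpace ℝ (Fin d) =>
        (n : ℝ) * (‖gradEmpCF y t + tPsiC t‖ ^ 2 * Real.exp (-a * ‖t‖ ^ 2))) volume := by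
      intro h
      apply hint
      refine Integrable.mono' (h.const_mul 2) hGc.aestronglyMeasurable ?_
      refine Filter.Eventually.of_forall fun t => ?_
      rw [Real.norm_eq_abs, abs_of_nonneg (hGnn t)]
      have := hkey t
      nlinarith [hGnn (-t), hGnn t]
    rw [integral_undef hnotF, integral_undef hint]
end

section
/- Let d ≥ 1, a > 0 and x ∈ ℝ^d. Then the vector-valued integral ∫_{ℝ^d} t ψ(t) CS⁺(t,x) exp(−a‖t‖²) dt = ( (2π)^{d/2} / (2a+1)^{d/2+1} ) · x · exp(−‖x‖²/(4a+2)). -/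
open MeasureTheory Real Complex

/-- `CS⁺(t,x) = cos(tᵀx) + sin(tᵀx)`. -/
noncomputable def CSplus {d : ℕ} (t x : EuclideanSpace ℝ (Fin d)) : ℝ :=
  Real.cos (inner ℝ t x : ℝ) + Real.sin (inner ℝ t x : ℝ)


noncomputable def gauss1 (b y : ℝ) (s : ℝ) : ℂ :=
  Complex.exp (-(b:ℂ) * s ^ 2 + Complex.I * y * s)

lemma integrable_gauss1 {b : ℝ} (hb : 0 < b) (y : ℝ) : Integrable (gauss1 b y) := by
  have h := integrable_cexp_quadratic (b := (b:ℂ)) (by simpa using hb) (Complex.I * y) 0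
  apply h.congr
  filter_upwards with s
  simp [gauss1, neg_mul]

lemma integral_gauss1 {b : ℝ} (hb : 0 < b) (y : ℝ) :
    ∫ s : ℝ, gauss1 b y s
      = ((π / b : ℂ) ^ (1 / 2 : ℂ)) * Complex.exp (-(y:ℂ) ^ 2 / (4 * b)) := by
  have h := fourierIntegral_gaussian (b := (b:ℂ)) (by simpa using hb) (y : ℂ)
  rw [← h]
  congr 1 with s
  rw [gauss1, ← Complex.exp_add]
  ring_nf

lemma integrable_id_gauss1 {b : ℝ} (hb : 0 < b) (y : ℝ) :
    Integrable (fun s : ℝ => (s:ℂ) * gauss1 b y s) := by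
  apply Integrable.mono' ((integrable_mul_exp_neg_mul_sq hb).abs)
  · apply Continuous.aestronglyMeasurable
    unfold gauss1
    fun_prop
  · filter_upwards with s
    simp only [gauss1, norm_mul, Complex.norm_real, Real.norm_eq_abs, Complex.norm_exp]
    have : (-(b:ℂ) * s ^ 2 + Complex.I * y * s).re = -b * s ^ 2 := by
      simp [pow_two, Complex.add_re, Complex.mul_re]
    rw [this, abs_mul, _root_.abs_of_nonneg (Real.exp_pos _).le]

lemma hasDerivAt_gauss1 {b y : ℝ} (s : ℝ) :
    HasDerivAt (gauss1 b y) ((-(2*b) * s + Complex.I * y) * gauss1 b y s) s := by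
  have h : HasDerivAt (fun z : ℂ => Complex.exp (-(b:ℂ) * z ^ 2 + Complex.I * y * z))
      ((-(b:ℂ) * (2 * s) + Complex.I * y) *
        Complex.exp (-(b:ℂ) * (s:ℂ) ^ 2 + Complex.I * y * s)) (s:ℂ) := by
    have h1 : HasDerivAt (fun z : ℂ => -(b:ℂ) * z ^ 2 + Complex.I * y * z)
        (-(b:ℂ) * (2 * s) + Complex.I * y) (s:ℂ) := by
      have := ((hasDerivAt_pow 2 (s:ℂ)).const_mul (-(b:ℂ))).add
        ((hasDerivAt_id (s:ℂ)).const_mul (Complex.I * y))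
      simpa [mul_comm, mul_assoc, pow_one, Pi.add_def] using this
    simpa [mul_comm] using h1.cexp
  have := h.comp_ofReal
  convert this using 1
  · rfl
  rw [gauss1]
  ring

lemma integral_id_gauss1 {b : ℝ} (hb : 0 < b) (y : ℝ) :
    ∫ s : ℝ, (s:ℂ) * gauss1 b y s
      = (Complex.I * y / (2 * b)) * ∫ s : ℝ, gauss1 b y s := by
  have hb' : (2 * b : ℂ) ≠ 0 := by
    simp only [ne_eq, mul_eq_zero, OfNat.ofNat_ne_zero, false_or]
    exact_mod_cast hb.ne'
  have hint : Integrable (fun s : ℝ => (-(2*b) * s + Complex.I * y) * gauss1 b y s) := by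
    have h1 := (integrable_id_gauss1 hb y).const_mul (-(2*b) : ℂ)
    have h2 := (integrable_gauss1 hb y).const_mul (Complex.I * y)
    have := h1.add h2
    apply this.congr
    filter_upwards with s
    simp only [Pi.add_apply]
    ring
  have hzero : ∫ s : ℝ, (-(2*b) * s + Complex.I * y) * gauss1 b y s = 0 :=
    integral_eq_zero_of_hasDerivAt_of_integrable (fun s => hasDerivAt_gauss1 s) hint
      (integrable_gauss1 hb y)
  have key : ∀ s : ℝ, (s:ℂ) * gauss1 b y s
      = (Complex.I * y / (2 * b)) * gauss1 b y s
        - (1 / (2 * b)) * ((-(2*b) * s + Complex.I * y) * gauss1 b y s) := by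
    intro s
    have hb0 : (b:ℂ) ≠ 0 := by exact_mod_cast hb.ne'
    field_simp
    ring
  calc ∫ s : ℝ, (s:ℂ) * gauss1 b y s
      = ∫ s : ℝ, ((Complex.I * y / (2 * b)) * gauss1 b y s
          - (1 / (2 * b)) * ((-(2*b) * s + Complex.I * y) * gauss1 b y s)) := by
        exact integral_congr_ae (Filter.Eventually.of_forall key)
    _ = (Complex.I * y / (2 * b)) * ∫ s : ℝ, gauss1 b y s := by
        rw [integral_sub ((integrable_gauss1 hb y).const_mul _) (hint.const_mul _),
          integral_const_mul, integral_const_mul, hzero, mul_zero, sub_zero]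

lemma poly_bound {b : ℝ} (hb : 0 < b) (u : ℝ) (hu : 0 ≤ u) :
    u * Real.exp (-b * u ^ 2) ≤ max 1 (2 / b) * Real.exp (-(b / 2) * u ^ 2) := by
  have hM : (1:ℝ) ≤ max 1 (2 / b) := le_max_left _ _
  have h1 : u ≤ max 1 (2 / b) * Real.exp (b / 2 * u ^ 2) := by
    have hexp1 : (1:ℝ) ≤ Real.exp (b / 2 * u ^ 2) := Real.one_le_exp (by positivity)
    rcases le_total u 1 with h | h
    · calc u ≤ 1 := h
        _ ≤ max 1 (2 / b) * 1 := by simpa using hM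
        _ ≤ max 1 (2 / b) * Real.exp (b / 2 * u ^ 2) := by
            apply mul_le_mul_of_nonneg_left hexp1 (by positivity)
    · have h2 : b / 2 * u ^ 2 ≤ Real.exp (b / 2 * u ^ 2) := by
        have := Real.add_one_le_exp (b / 2 * u ^ 2)
        nlinarith [Real.exp_pos (b / 2 * u ^ 2)]
      calc u ≤ u ^ 2 := by nlinarith
        _ = (2 / b) * (b / 2 * u ^ 2) := by field_simp
        _ ≤ (2 / b) * Real.exp (b / 2 * u ^ 2) := by
            apply mul_le_mul_of_nonneg_left h2 (by positivity)
        _ ≤ max 1 (2 / b) * Real.exp (b / 2 * u ^ 2) := by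
            apply mul_le_mul_of_nonneg_right (le_max_right _ _) (Real.exp_pos _).le
  calc u * Real.exp (-b * u ^ 2)
      ≤ (max 1 (2 / b) * Real.exp (b / 2 * u ^ 2)) * Real.exp (-b * u ^ 2) :=
        mul_le_mul_of_nonneg_right h1 (Real.exp_pos _).le
    _ = max 1 (2 / b) * Real.exp (-(b / 2) * u ^ 2) := by
        rw [mul_assoc, ← Real.exp_add]
        ring_nf

/-- The vector-valued integral
`∫_{ℝ^d} t ψ(t) CS⁺(t,x) e^{-a‖t‖²} dt = (2π)^{d/2} (2a+1)^{-(d/2+1)} x e^{-‖x‖²/(4a+2)}`. -/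
theorem integral_vec_tPsi_CSplus_gaussian (d : ℕ) (hd : 1 ≤ d) (a : ℝ) (ha : 0 < a)
    (x : EuclideanSpace ℝ (Fin d)) :
    ∫ t : EuclideanSpace ℝ (Fin d),
        (stdNormalCF t * CSplus t x * Real.exp (-a * ‖t‖ ^ 2)) • t
      = ((2 * π) ^ ((d : ℝ) / 2) / (2 * a + 1) ^ ((d : ℝ) / 2 + 1)
          * Real.exp (-‖x‖ ^ 2 / (4 * a + 2))) • x := by
  have hb : (0:ℝ) < a + 1/2 := by linarith
  set b : ℝ := a + 1/2 with hbdef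
  set c : EuclideanSpace ℝ (Fin d) → ℝ :=
    fun t => stdNormalCF t * CSplus t x * Real.exp (-a * ‖t‖ ^ 2) with hc
  -- integrability of the vector-valued integrand
  have hgauss_int : Integrable (fun t : EuclideanSpace ℝ (Fin d) =>
      Real.exp (-(b/2) * ‖t‖ ^ 2)) := by
    have h0 := (GaussianFourier.integrable_cexp_neg_mul_sq_norm_add
      (V := EuclideanSpace ℝ (Fin d)) (b := ((b/2 : ℝ) : ℂ)) (by simpa using half_pos hb)
      0 0).norm
    apply h0.congr
    filter_upwards with v
    simp [Complex.norm_exp, neg_mul, ← Complex.ofReal_pow]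
  have hcbound : ∀ t : EuclideanSpace ℝ (Fin d), |c t| ≤ 2 * Real.exp (-b * ‖t‖ ^ 2) := by
    intro t
    have h1 : |Real.cos (inner ℝ t x : ℝ) + Real.sin (inner ℝ t x : ℝ)| ≤ 2 := by
      calc |Real.cos (inner ℝ t x : ℝ) + Real.sin (inner ℝ t x : ℝ)|
          ≤ |Real.cos (inner ℝ t x : ℝ)| + |Real.sin (inner ℝ t x : ℝ)| := abs_add_le _ _
        _ ≤ 1 + 1 := add_le_add (Real.abs_cos_le_one _) (Real.abs_sin_le_one _)
        _ = 2 := by norm_num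
    have h2 : stdNormalCF t * Real.exp (-a * ‖t‖ ^ 2) = Real.exp (-b * ‖t‖ ^ 2) := by
      rw [stdNormalCF, ← Real.exp_add, hbdef]
      ring_nf
    calc |c t| = (stdNormalCF t * Real.exp (-a * ‖t‖ ^ 2)) * |CSplus t x| := by
          rw [hc]
          simp only [abs_mul, stdNormalCF]
          rw [_root_.abs_of_nonneg (Real.exp_pos _).le, _root_.abs_of_nonneg (Real.exp_pos _).le]
          ring
      _ = Real.exp (-b * ‖t‖ ^ 2) * |CSplus t x| := by rw [h2]
      _ ≤ Real.exp (-b * ‖t‖ ^ 2) * 2 := by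
          apply mul_le_mul_of_nonneg_left _ (Real.exp_pos _).le
          rw [CSplus]; exact h1
      _ = 2 * Real.exp (-b * ‖t‖ ^ 2) := by ring
  have hFint : Integrable (fun t : EuclideanSpace ℝ (Fin d) => c t • t) := by
    apply Integrable.mono' (hgauss_int.const_mul (2 * max 1 (2/b)))
    · apply Continuous.aestronglyMeasurable
      refine Continuous.smul (f := c) ?_ continuous_id
      simp only [hc, stdNormalCF, CSplus]
      have h1 : Continuous fun t : EuclideanSpace ℝ (Fin d) => (inner ℝ t x : ℝ) :=
        continuous_id.inner continuous_const
      exact ((Real.continuous_exp.comp (by fun_prop)).mul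
        ((Real.continuous_cos.comp h1).add (Real.continuous_sin.comp h1))).mul
        (Real.continuous_exp.comp (by fun_prop))
    · filter_upwards with t
      rw [norm_smul, Real.norm_eq_abs]
      calc |c t| * ‖t‖ ≤ (2 * Real.exp (-b * ‖t‖ ^ 2)) * ‖t‖ :=
            mul_le_mul_of_nonneg_right (hcbound t) (norm_nonneg _)
        _ = 2 * (‖t‖ * Real.exp (-b * ‖t‖ ^ 2)) := by ring
        _ ≤ 2 * (max 1 (2/b) * Real.exp (-(b/2) * ‖t‖ ^ 2)) := by
            apply mul_le_mul_of_nonneg_left (poly_bound hb _ (norm_nonneg _)) (by norm_num)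
        _ = 2 * max 1 (2/b) * Real.exp (-(b/2) * ‖t‖ ^ 2) := by ring
  -- componentwise
  ext i
  have hproj : (∫ t : EuclideanSpace ℝ (Fin d), c t • t) i
      = ∫ t : EuclideanSpace ℝ (Fin d), c t * t i := by
    have := ((EuclideanSpace.proj i : EuclideanSpace ℝ (Fin d) →L[ℝ] ℝ)).integral_comp_comm hFint
    simpa [smul_eq_mul, mul_comm] using this.symm
  rw [hc] at hproj
  rw [hproj]
  rw [← ((EuclideanSpace.volume_preserving_symm_measurableEquiv_toLp (Fin d)).symm).integral_comp
      (MeasurableEquiv.measurableEmbedding _)]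
  set es := (MeasurableEquiv.toLp 2 (Fin d → ℝ)).symm.symm with hes
  set G : Fin d → ℝ → ℂ :=
    fun j s => (if j = i then (s:ℂ) else 1) * gauss1 b (x j) s with hG
  have hes_apply : ∀ (u : Fin d → ℝ) (j : Fin d), es u j = u j := fun u j => rfl
  have hnormsq : ∀ u : Fin d → ℝ, ‖es u‖ ^ 2 = ∑ j, u j ^ 2 := by
    intro u
    rw [EuclideanSpace.norm_eq, Real.sq_sqrt (Finset.sum_nonneg fun j _ => by positivity)]
    simp [hes_apply, Real.norm_eq_abs, sq_abs]
  have hinner : ∀ u : Fin d → ℝ, (inner ℝ (es u) x : ℝ) = ∑ j, u j * x j := by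
    intro u
    simp [PiLp.inner_apply, RCLike.inner_apply, conj_trivial, hes_apply, mul_comm]
  have hxnorm : ‖x‖ ^ 2 = ∑ j, x j ^ 2 := by
    rw [EuclideanSpace.norm_eq, Real.sq_sqrt (Finset.sum_nonneg fun j _ => by positivity)]
    simp [Real.norm_eq_abs, sq_abs]
  have hpt : ∀ u : Fin d → ℝ,
      c (es u) * es u i = ((1 - Complex.I) * ∏ j, G j (u j)).re := by
    intro u
    have hprod : ∏ j, G j (u j)
        = (u i : ℂ) * Complex.exp ((((-b * ∑ j, u j ^ 2 : ℝ)) : ℂ)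
            + ((∑ j, u j * x j : ℝ) : ℂ) * Complex.I) := by
      rw [hG, Finset.prod_mul_distrib]
      congr 1
      · simp [Finset.prod_ite_eq']
      · simp only [gauss1]
        rw [← Complex.exp_sum]
        congr 1
        push_cast
        rw [Finset.sum_add_distrib]
        congr 1
        · rw [Finset.mul_sum]
        · rw [Finset.sum_mul]
          exact Finset.sum_congr rfl fun j _ => by ring
    rw [hprod]
    rw [Complex.exp_add, ← Complex.ofReal_exp, Complex.exp_mul_I, ← Complex.ofReal_cos,
      ← Complex.ofReal_sin]
    simp only [hc, stdNormalCF, CSplus, hnormsq u, hinner u, hes_apply]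
    set S : ℝ := ∑ j, u j ^ 2
    set P : ℝ := ∑ j, u j * x j
    have hexp : Real.exp (-S / 2) * Real.exp (-a * S) = Real.exp (-b * S) := by
      rw [← Real.exp_add, hbdef]; ring_nf
    simp only [Complex.mul_re, Complex.mul_im, Complex.sub_re, Complex.sub_im, Complex.add_re,
      Complex.add_im, Complex.I_re, Complex.I_im, Complex.ofReal_re, Complex.ofReal_im,
      Complex.one_re, Complex.one_im]
    rw [← hexp]
    ring
  rw [integral_congr_ae (Filter.Eventually.of_forall hpt)]
  have hGint : ∀ j, Integrable (G j) := by
    intro j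
    by_cases hj : j = i
    · subst hj
      have : G j = fun s : ℝ => (s:ℂ) * gauss1 b (x j) s := by funext s; simp [hG]
      rw [this]
      exact integrable_id_gauss1 hb (x j)
    · simpa [hG, hj] using integrable_gauss1 hb (x j)
  have hPint : Integrable (fun u : Fin d → ℝ => ∏ j, G j (u j)) :=
    Integrable.fintype_prod hGint
  have hstep1 : ∫ u : Fin d → ℝ, ((1 - Complex.I) * ∏ j, G j (u j)).re
      = ((1 - Complex.I) * ∏ j, ∫ s : ℝ, G j s).re := by
    rw [← integral_fintype_prod_eq_prod (f := G), ← integral_const_mul]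
    exact integral_re (hPint.const_mul _)
  rw [hstep1]
  have hGj : ∀ j, (∫ s : ℝ, G j s)
      = (if j = i then Complex.I * (x i : ℂ) / (2 * b) else 1)
        * (((π / b : ℂ) ^ (1 / 2 : ℂ)) * Complex.exp (-((x j : ℂ)) ^ 2 / (4 * b))) := by
    intro j
    by_cases hj : j = i
    · subst hj
      have hGeq : G j = fun s : ℝ => (s:ℂ) * gauss1 b (x j) s := by funext s; simp [hG]
      rw [hGeq, integral_id_gauss1 hb, integral_gauss1 hb, if_pos rfl]
    · have hGeq : G j = fun s : ℝ => gauss1 b (x j) s := by funext s; simp [hG, hj]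
      rw [hGeq, integral_gauss1 hb, if_neg hj, one_mul]
  have hprodval : ∏ j, ∫ s : ℝ, G j s
      = (Complex.I * (x i : ℂ) / (2 * b))
        * ((((π / b) ^ ((d:ℝ)/2) * Real.exp (-‖x‖ ^ 2 / (4 * b)) : ℝ)) : ℂ) := by
    rw [Finset.prod_congr rfl fun j _ => hGj j, Finset.prod_mul_distrib]
    congr 1
    · simp [Finset.prod_ite_eq']
    · rw [Finset.prod_mul_distrib, Finset.prod_const, ← Complex.exp_sum, Finset.card_univ,
        Fintype.card_fin]
      have hb1 : (↑π / (b:ℂ)) = ((π / b : ℝ) : ℂ) := by push_cast; ring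
      have hb2 : ((1:ℂ)/2) = ((1/2 : ℝ) : ℂ) := by norm_num
      have hb3 : ((π / b : ℝ) : ℂ) ^ (((1/2 : ℝ) : ℂ)) = (((π / b) ^ (1/2 : ℝ) : ℝ) : ℂ) :=
        (Complex.ofReal_cpow (by positivity) _).symm
      rw [hb1, hb2, hb3, ← Complex.ofReal_pow,
        ← Real.rpow_natCast ((π / b) ^ (1/2 : ℝ)) d,
        ← Real.rpow_mul (by positivity : (0:ℝ) ≤ π / b)]
      have hsum : ∑ j, -((x j : ℂ)) ^ 2 / (4 * (b:ℂ)) = ((-‖x‖ ^ 2 / (4 * b) : ℝ) : ℂ) := by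
        rw [hxnorm]
        push_cast
        rw [← Finset.sum_div]
        congr 1
        exact Finset.sum_neg_distrib _
      rw [hsum, ← Complex.ofReal_exp]
      push_cast
      rw [show (1/2 : ℝ) * (d : ℝ) = (d : ℝ) / 2 by ring]
  rw [hprodval]
  set r : ℝ := (π / b) ^ ((d:ℝ)/2) * Real.exp (-‖x‖ ^ 2 / (4 * b)) with hr
  have hbne : (2 * (b:ℂ)) ≠ 0 := by
    simp only [ne_eq, mul_eq_zero, OfNat.ofNat_ne_zero, false_or]
    exact_mod_cast hb.ne'
  have hstep2 : (1 - Complex.I) * (Complex.I * (x i : ℂ) / (2 * (b:ℂ)) * (r : ℂ))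
      = ((x i / (2 * b) * r : ℝ) : ℂ) * (1 + Complex.I) := by
    push_cast
    have hI := Complex.I_mul_I
    field_simp
    linear_combination (-((x i : ℂ) * (r:ℂ) * (b:ℂ)⁻¹)) * hI
  rw [hstep2]
  have hre2 : ∀ ρ : ℝ, ((ρ : ℂ) * (1 + Complex.I)).re = ρ := by
    intro ρ
    simp [Complex.mul_re, Complex.add_re, Complex.add_im]
  rw [hre2 _]
  -- final real arithmetic
  have hbpos2 : (0:ℝ) < 2 * b := by linarith
  have h2b : 2 * a + 1 = 2 * b := by rw [hbdef]; ring
  have h4b : 4 * a + 2 = 4 * b := by rw [hbdef]; ring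
  have hpb : π / b = (2 * π) / (2 * b) := by
    rw [mul_div_mul_left _ _ (two_ne_zero)]
  simp only [PiLp.smul_apply, smul_eq_mul]
  rw [h2b, h4b, hr, hpb, Real.div_rpow (by positivity) (by positivity),
    Real.rpow_add_one hbpos2.ne']
  field_simp
end

section
/- Let d ≥ 1 and a > 0. Then ∫_{ℝ^d} ( d − (d + d‖t‖² − ‖t‖⁴ + ‖t‖⁶/2) exp(−‖t‖²) ) exp(−a‖t‖²) dt = (π/a)^{d/2} d − (π/(a+1))^{d/2} · d · (16a³ + (8d+48)a² + (12d+40)a + d² + 10d + 16) / (16(a+1)³). (This is the expectation E[T_{∞,a}] of the limit null distribution of the test statistic.) -/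
open MeasureTheory Real

noncomputable def momC (d : ℕ) : ℝ :=
  (d : ℝ) * (volume (Metric.ball (0 : EuclideanSpace ℝ (Fin d)) 1)).toReal / 2

lemma moment_eq (d : ℕ) (hd : 1 ≤ d) (k : ℕ) {b : ℝ} (hb : 0 < b) :
    ∫ t : EuclideanSpace ℝ (Fin d), ‖t‖ ^ (2 * k) * Real.exp (-b * ‖t‖ ^ 2)
      = momC d * (Real.Gamma ((d : ℝ) / 2 + k) * b ^ (-((d : ℝ) / 2 + k))) := by
  haveI : Nontrivial (EuclideanSpace ℝ (Fin d)) := by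
    apply Module.nontrivial_of_finrank_pos (R := ℝ)
    rw [finrank_euclideanSpace_fin]; omega
  have h := MeasureTheory.integral_fun_norm_addHaar
      (volume : Measure (EuclideanSpace ℝ (Fin d)))
      (fun r : ℝ => r ^ (2 * k) * Real.exp (-b * r ^ 2))
  rw [finrank_euclideanSpace_fin] at h
  rw [h]
  have hrad : (∫ y in Set.Ioi (0:ℝ), y ^ (d - 1) • (y ^ (2 * k) * Real.exp (-b * y ^ 2)))
      = b ^ (-((d:ℝ)/2 + k)) * (1/2) * Real.Gamma ((d:ℝ)/2 + k) := by
    have hq : (-1 : ℝ) < ((d - 1 + 2 * k : ℕ) : ℝ) :=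
      lt_of_lt_of_le (by norm_num) (Nat.cast_nonneg _)
    have h2 := integral_rpow_mul_exp_neg_mul_rpow (p := 2)
      (q := ((d - 1 + 2 * k : ℕ) : ℝ)) (by norm_num) hq hb
    have hcast : (((d - 1 + 2 * k : ℕ) : ℝ) + 1) / 2 = (d:ℝ)/2 + k := by
      have h1 : ((d - 1 + 2 * k : ℕ) : ℝ) = (d : ℝ) - 1 + 2 * k := by
        have : d - 1 + 2 * k = d + 2 * k - 1 := by omega
        rw [this, Nat.cast_sub (by omega)]
        push_cast; ring
      rw [h1]; ring
    rw [neg_div, hcast] at h2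
    rw [← h2]
    refine setIntegral_congr_fun measurableSet_Ioi (fun y hy => ?_)
    have hy' : (0:ℝ) < y := hy
    rw [smul_eq_mul, Real.rpow_natCast,
      show (2:ℝ) = ((2:ℕ):ℝ) by norm_num, Real.rpow_natCast, pow_add]
    ring
  rw [hrad, momC]
  simp only [nsmul_eq_mul, smul_eq_mul, measureReal_def]
  ring

lemma gauss_eq (d : ℕ) (hd : 1 ≤ d) {b : ℝ} (hb : 0 < b) :
    (π / b) ^ ((d : ℝ) / 2)
      = momC d * (Real.Gamma ((d : ℝ) / 2) * b ^ (-((d : ℝ) / 2))) := by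
  have h := moment_eq d hd 0 hb
  simp only [Nat.mul_zero, pow_zero, one_mul, Nat.cast_zero, add_zero, mul_zero] at h
  have h2 := GaussianFourier.integral_rexp_neg_mul_sq_norm (V := EuclideanSpace ℝ (Fin d)) hb
  rw [finrank_euclideanSpace_fin] at h2
  rw [← h2, h]

lemma integrable_mom (d : ℕ) (k : ℕ) {b : ℝ} (hb : 0 < b) :
    Integrable (fun t : EuclideanSpace ℝ (Fin d) =>
      ‖t‖ ^ (2 * k) * Real.exp (-b * ‖t‖ ^ 2)) := by
  have hb2 : (0:ℝ) < b / 2 := half_pos hb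
  have hint : Integrable (fun t : EuclideanSpace ℝ (Fin d) =>
      Real.exp (-(b / 2) * ‖t‖ ^ 2)) := by
    have h := (GaussianFourier.integrable_cexp_neg_mul_sq_norm_add (V := EuclideanSpace ℝ (Fin d))
      (b := ((b/2 : ℝ) : ℂ)) (by simpa using hb2) 0 0).norm
    refine h.congr (Filter.Eventually.of_forall fun t => ?_)
    simp [Complex.norm_exp, ← Complex.ofReal_pow]
  refine (hint.const_mul ((k.factorial : ℝ) * (2 / b) ^ k)).mono'
    (((continuous_norm.pow _).mul (by fun_prop)).aestronglyMeasurable)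
    (Filter.Eventually.of_forall fun t => ?_)
  have h0 : (0:ℝ) ≤ ‖t‖ ^ (2 * k) * Real.exp (-b * ‖t‖ ^ 2) := by positivity
  rw [Real.norm_of_nonneg h0]
  set x : ℝ := b / 2 * ‖t‖ ^ 2 with hx
  have hxnn : 0 ≤ x := by positivity
  have hpow : x ^ k / k.factorial ≤ Real.exp x := by
    calc x ^ k / k.factorial
        ≤ ∑ i ∈ Finset.range (k + 1), x ^ i / i.factorial := by
          refine Finset.single_le_sum (f := fun i => x ^ i / (i.factorial : ℝ))
            (fun i _ => by positivity) (Finset.self_mem_range_succ k)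
      _ ≤ Real.exp x := Real.sum_le_exp_of_nonneg hxnn (k + 1)
  have hnorm : ‖t‖ ^ (2 * k) = (2 / b) ^ k * x ^ k := by
    rw [hx, mul_pow, pow_mul, ← mul_pow]
    field_simp
    rw [← mul_pow]
    congr 1
    field_simp
  have hexp : Real.exp x * Real.exp (-b * ‖t‖ ^ 2) = Real.exp (-(b/2) * ‖t‖ ^ 2) := by
    rw [← Real.exp_add]; congr 1; rw [hx]; ring
  calc ‖t‖ ^ (2 * k) * Real.exp (-b * ‖t‖ ^ 2)
      = (2 / b) ^ k * (x ^ k / k.factorial) * (k.factorial : ℝ)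
          * Real.exp (-b * ‖t‖ ^ 2) := by
        rw [hnorm]
        have : (k.factorial : ℝ) ≠ 0 := by positivity
        field_simp
    _ ≤ (2 / b) ^ k * Real.exp x * (k.factorial : ℝ) * Real.exp (-b * ‖t‖ ^ 2) := by
        have h1 : (0:ℝ) ≤ (2 / b) ^ k := by positivity
        have h2 : (0:ℝ) ≤ (k.factorial : ℝ) := by positivity
        have h3 : (0:ℝ) ≤ Real.exp (-b * ‖t‖ ^ 2) := (Real.exp_pos _).le
        gcongr
    _ = (k.factorial : ℝ) * (2 / b) ^ k * Real.exp (-(b/2) * ‖t‖ ^ 2) := by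
        rw [← hexp]; ring

/-- Theorem 3.3. The expectation `E[T_{∞,a}]` of the limit null
distribution: `∫ tr K(t,t) w_a(t) dt` equals the stated closed form. -/
theorem expectation_limit_null_distribution (d : ℕ) (hd : 1 ≤ d) (a : ℝ) (ha : 0 < a) :
    ∫ t : EuclideanSpace ℝ (Fin d),
        ((d : ℝ) - ((d : ℝ) + (d : ℝ) * ‖t‖ ^ 2 - ‖t‖ ^ 4 + ‖t‖ ^ 6 / 2)
            * Real.exp (-‖t‖ ^ 2)) * Real.exp (-a * ‖t‖ ^ 2)
      = (π / a) ^ ((d : ℝ) / 2) * (d : ℝ)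
        - (π / (a + 1)) ^ ((d : ℝ) / 2)
            * ((d : ℝ) * (16 * a ^ 3 + (8 * (d : ℝ) + 48) * a ^ 2
                + (12 * (d : ℝ) + 40) * a + (d : ℝ) ^ 2 + 10 * (d : ℝ) + 16)
              / (16 * (a + 1) ^ 3)) := by
  have hu : (0:ℝ) < a + 1 := by linarith
  have key : ∀ t : EuclideanSpace ℝ (Fin d),
      ((d : ℝ) - ((d : ℝ) + (d : ℝ) * ‖t‖ ^ 2 - ‖t‖ ^ 4 + ‖t‖ ^ 6 / 2)
          * Real.exp (-‖t‖ ^ 2)) * Real.exp (-a * ‖t‖ ^ 2)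
        = (d : ℝ) * (‖t‖ ^ (2*0) * Real.exp (-a * ‖t‖ ^ 2))
          + ((-(d : ℝ)) * (‖t‖ ^ (2*0) * Real.exp (-(a+1) * ‖t‖ ^ 2))
          + ((-(d : ℝ)) * (‖t‖ ^ (2*1) * Real.exp (-(a+1) * ‖t‖ ^ 2))
          + ((1:ℝ) * (‖t‖ ^ (2*2) * Real.exp (-(a+1) * ‖t‖ ^ 2))
          + (-(1/2 : ℝ)) * (‖t‖ ^ (2*3) * Real.exp (-(a+1) * ‖t‖ ^ 2))))) := by
    intro t
    have he : Real.exp (-(a+1) * ‖t‖ ^ 2)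
        = Real.exp (-‖t‖ ^ 2) * Real.exp (-a * ‖t‖ ^ 2) := by
      rw [← Real.exp_add]; congr 1; ring
    rw [he]; ring
  simp only [key]
  have I0a := integrable_mom d 0 ha
  have I0 := integrable_mom d 0 hu
  have I1 := integrable_mom d 1 hu
  have I2 := integrable_mom d 2 hu
  have I3 := integrable_mom d 3 hu
  have J2 : Integrable (fun t : EuclideanSpace ℝ (Fin d) =>
      (1:ℝ) * (‖t‖ ^ (2*2) * Real.exp (-(a+1) * ‖t‖ ^ 2))
        + (-(1/2 : ℝ)) * (‖t‖ ^ (2*3) * Real.exp (-(a+1) * ‖t‖ ^ 2))) :=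
    (I2.const_mul _).add (I3.const_mul _)
  have J1 : Integrable (fun t : EuclideanSpace ℝ (Fin d) =>
      (-(d : ℝ)) * (‖t‖ ^ (2*1) * Real.exp (-(a+1) * ‖t‖ ^ 2))
        + ((1:ℝ) * (‖t‖ ^ (2*2) * Real.exp (-(a+1) * ‖t‖ ^ 2))
          + (-(1/2 : ℝ)) * (‖t‖ ^ (2*3) * Real.exp (-(a+1) * ‖t‖ ^ 2)))) :=
    (I1.const_mul _).add J2
  have J0 : Integrable (fun t : EuclideanSpace ℝ (Fin d) =>
      (-(d : ℝ)) * (‖t‖ ^ (2*0) * Real.exp (-(a+1) * ‖t‖ ^ 2))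
        + ((-(d : ℝ)) * (‖t‖ ^ (2*1) * Real.exp (-(a+1) * ‖t‖ ^ 2))
          + ((1:ℝ) * (‖t‖ ^ (2*2) * Real.exp (-(a+1) * ‖t‖ ^ 2))
            + (-(1/2 : ℝ)) * (‖t‖ ^ (2*3) * Real.exp (-(a+1) * ‖t‖ ^ 2))))) :=
    (I0.const_mul _).add J1
  rw [integral_add (I0a.const_mul _) J0,
      integral_add (I0.const_mul _) J1,
      integral_add (I1.const_mul _) J2,
      integral_add (I2.const_mul _) (I3.const_mul _),
      integral_const_mul, integral_const_mul, integral_const_mul, integral_const_mul,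
      integral_const_mul,
      moment_eq d hd 0 ha, moment_eq d hd 0 hu, moment_eq d hd 1 hu,
      moment_eq d hd 2 hu, moment_eq d hd 3 hu,
      gauss_eq d hd ha, gauss_eq d hd hu]
  simp only [Nat.cast_zero, Nat.cast_one, Nat.cast_ofNat, add_zero]
  have hdpos : (0:ℝ) < (d:ℝ) := by exact_mod_cast Nat.lt_of_lt_of_le Nat.zero_lt_one hd
  have hs : (0:ℝ) < (d:ℝ)/2 := by positivity
  have hG1 : Real.Gamma ((d:ℝ)/2 + 1) = (d:ℝ)/2 * Real.Gamma ((d:ℝ)/2) :=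
    Real.Gamma_add_one hs.ne'
  have hG2 : Real.Gamma ((d:ℝ)/2 + 2)
      = ((d:ℝ)/2 + 1) * (((d:ℝ)/2) * Real.Gamma ((d:ℝ)/2)) := by
    rw [show (d:ℝ)/2 + 2 = ((d:ℝ)/2 + 1) + 1 by ring,
      Real.Gamma_add_one (by positivity), hG1]
  have hG3 : Real.Gamma ((d:ℝ)/2 + 3)
      = ((d:ℝ)/2 + 2) * (((d:ℝ)/2 + 1) * (((d:ℝ)/2) * Real.Gamma ((d:ℝ)/2))) := by
    rw [show (d:ℝ)/2 + 3 = ((d:ℝ)/2 + 2) + 1 by ring,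
      Real.Gamma_add_one (by positivity), hG2]
  have hrsplit : ∀ (c : ℝ), (a+1) ^ (-((d:ℝ)/2 + c))
      = (a+1) ^ (-((d:ℝ)/2)) * (a+1) ^ (-c) := fun c => by
    rw [neg_add, Real.rpow_add hu]
  have hp1 : (a+1) ^ (-(1:ℝ)) = ((a+1) ^ (1:ℕ))⁻¹ := by
    rw [Real.rpow_neg hu.le, show ((1:ℝ)) = ((1:ℕ):ℝ) by norm_num, Real.rpow_natCast]
  have hp2 : (a+1) ^ (-(2:ℝ)) = ((a+1) ^ (2:ℕ))⁻¹ := by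
    rw [Real.rpow_neg hu.le, show ((2:ℝ)) = ((2:ℕ):ℝ) by norm_num, Real.rpow_natCast]
  have hp3 : (a+1) ^ (-(3:ℝ)) = ((a+1) ^ (3:ℕ))⁻¹ := by
    rw [Real.rpow_neg hu.le, show ((3:ℝ)) = ((3:ℕ):ℝ) by norm_num, Real.rpow_natCast]
  rw [hG1, hG2, hG3, hrsplit 1, hrsplit 2, hrsplit 3, hp1, hp2, hp3]
  have hne : (a + 1) ≠ 0 := hu.ne'
  field_simp
  ring
end
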